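/- Fix α with 0 < α < 1 and a natural number m ≥ 1. Define φ(n, m) = 2 ∑_{k=1}^{m} k² Δ_k(α) + 2m ∑_{k=m+1}^{n} k Δ_k(α) + 2 m n ∑_{k=n+1}^∞ Δ_k(α). Then as n → ∞ with m fixed, φ(n, m) is asymptotic to (2m/(1−α)) n^(1−α). -/

import Mathlib

open Filter Topology

/-- ℓ⁺_m(α) = 1 - (m + 2^(1/α))^(-α) -/
noncomputable def ellp (α : ℝ) (m : ℕ) : ℝ := 1 - ((m : ℝ) + (2 : ℝ) ^ (1/α)) ^ (-α)

/-- Δ_k(α) = ℓ⁺_k(α) - ℓ⁺_{k-1}(α) -/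
noncomputable def Dlt (α : ℝ) (k : ℕ) : ℝ := ellp α k - ellp α (k - 1)

/-- Position-position auto-correlation of the Slicer Map, for times m ≤ n. -/
noncomputable def phi (α : ℝ) (n m : ℕ) : ℝ :=
  2 * ∑ k ∈ Finset.Icc 1 m, (k : ℝ) ^ 2 * Dlt α k
    + 2 * m * ∑ k ∈ Finset.Icc (m + 1) n, (k : ℝ) * Dlt α k
    + 2 * m * n * ∑' k : ℕ, Dlt α (n + 1 + k)

/-- the constant 2^(1/α) -/
noncomputable def slc (α : ℝ) : ℝ := (2 : ℝ) ^ (1/α)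

/-- f j = (j + c)^(-α) -/
noncomputable def fSl (α : ℝ) (j : ℕ) : ℝ := ((j : ℝ) + slc α) ^ (-α)

lemma slc_pos (α : ℝ) : 0 < slc α := Real.rpow_pos_of_pos two_pos _

lemma fSl_base_pos (α : ℝ) (j : ℕ) : 0 < (j : ℝ) + slc α := by
  have := slc_pos α; positivity

lemma fSl_pos (α : ℝ) (j : ℕ) : 0 < fSl α j :=
  Real.rpow_pos_of_pos (fSl_base_pos α j) _

lemma Dlt_eq (α : ℝ) (k : ℕ) : Dlt α k = fSl α (k - 1) - fSl α k := by
  unfold Dlt ellp fSl slc; ring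

lemma fSl_anti (α : ℝ) (hα : 0 < α) {j j' : ℕ} (h : j ≤ j') : fSl α j' ≤ fSl α j := by
  apply Real.rpow_le_rpow_of_nonpos (fSl_base_pos α j)
  · exact add_le_add_left (by exact_mod_cast h) _
  · linarith

lemma fSl_tendsto (α : ℝ) (hα : 0 < α) : Tendsto (fSl α) atTop (𝓝 0) := by
  have h1 : Tendsto (fun j : ℕ => (j : ℝ) + slc α) atTop atTop :=
    tendsto_atTop_add_const_right _ _ tendsto_natCast_atTop_atTop
  exact (tendsto_rpow_neg_atTop hα).comp h1

lemma tsum_Dlt (α : ℝ) (hα : 0 < α) (n : ℕ) :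
    ∑' k : ℕ, Dlt α (n + 1 + k) = fSl α n := by
  have hterm : ∀ k : ℕ, Dlt α (n + 1 + k) = fSl α (n + k) - fSl α (n + (k + 1)) := by
    intro k
    rw [Dlt_eq]
    congr 2 <;> omega
  have key : ∀ N : ℕ, ∑ k ∈ Finset.range N, Dlt α (n + 1 + k) = fSl α n - fSl α (n + N) := by
    intro N
    calc ∑ k ∈ Finset.range N, Dlt α (n + 1 + k)
        = ∑ k ∈ Finset.range N, (fSl α (n + k) - fSl α (n + (k + 1))) :=
          Finset.sum_congr rfl fun k _ => hterm k
      _ = fSl α (n + 0) - fSl α (n + N) := Finset.sum_range_sub' (fun i => fSl α (n + i)) N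
      _ = fSl α n - fSl α (n + N) := by rw [Nat.add_zero]
  have hnonneg : ∀ k : ℕ, 0 ≤ Dlt α (n + 1 + k) := by
    intro k
    rw [hterm k, sub_nonneg]
    exact fSl_anti α hα (by omega)
  have hlim : Tendsto (fun N : ℕ => ∑ k ∈ Finset.range N, Dlt α (n + 1 + k)) atTop
      (𝓝 (fSl α n)) := by
    simp_rw [key]
    have h2 : Tendsto (fun N : ℕ => fSl α (n + N)) atTop (𝓝 0) := by
      have := (fSl_tendsto α hα).comp (tendsto_add_atTop_nat n)
      exact this.congr fun N => congrArg (fSl α) (Nat.add_comm N n)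
    simpa using tendsto_const_nhds.sub h2
  exact ((hasSum_iff_tendsto_nat_of_nonneg hnonneg _).mpr hlim).tsum_eq

lemma middle_sum (α : ℝ) (m : ℕ) : ∀ n : ℕ, m ≤ n →
    ∑ k ∈ Finset.Icc (m + 1) n, (k : ℝ) * Dlt α k
      = ((m : ℝ) + 1) * fSl α m - ((n : ℝ) + 1) * fSl α n
        + ∑ k ∈ Finset.Icc (m + 1) n, fSl α k := by
  intro n hn
  induction n, hn using Nat.le_induction with
  | base => rw [Finset.Icc_eq_empty (by omega)]; simp
  | succ n hn ih =>
    rw [Finset.sum_Icc_succ_top (by omega), Finset.sum_Icc_succ_top (by omega), ih,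
      Dlt_eq]
    simp only [Nat.add_sub_cancel]
    push_cast
    ring

lemma incr_upper {x q : ℝ} (hx : 0 < x) (hq0 : 0 ≤ q) (hq1 : q ≤ 1) :
    (x + 1) ^ q - x ^ q ≤ q * x ^ (q - 1) := by
  have h0x : (0:ℝ) ≤ 1/x := by positivity
  have hb := rpow_one_add_le_one_add_mul_self (s := 1/x) (by linarith) hq0 hq1
  have h1 : (x + 1) ^ q ≤ x ^ q * (1 + q * (1/x)) := by
    calc (x + 1) ^ q = (x * (1 + 1/x)) ^ q := by rw [mul_add, mul_one, mul_one_div,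
            div_self hx.ne']
      _ = x ^ q * (1 + 1/x) ^ q := Real.mul_rpow hx.le (by positivity)
      _ ≤ x ^ q * (1 + q * (1/x)) :=
          mul_le_mul_of_nonneg_left hb (Real.rpow_nonneg hx.le _)
  have h2 : x ^ q * (1 + q * (1/x)) = x ^ q + q * x ^ (q - 1) := by
    rw [Real.rpow_sub hx, Real.rpow_one]
    field_simp
  linarith

lemma incr_lower {x q : ℝ} (hx : 0 ≤ x) (hq0 : 0 ≤ q) (hq1 : q ≤ 1) :
    q * (x + 1) ^ (q - 1) ≤ (x + 1) ^ q - x ^ q := by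
  have hx1 : 0 < x + 1 := by linarith
  have hle : 1/(x+1) ≤ 1 := by
    rw [div_le_one hx1]; linarith
  have hs : -1 ≤ -(1/(x+1)) := by linarith
  have hb := rpow_one_add_le_one_add_mul_self hs hq0 hq1
  have key : x ^ q ≤ (x + 1) ^ q * (1 - q/(x+1)) := by
    calc x ^ q = ((x + 1) * (1 - 1/(x+1))) ^ q := by
          rw [mul_sub, mul_one, mul_one_div, div_self hx1.ne']
          ring_nf
      _ = (x + 1) ^ q * (1 - 1/(x+1)) ^ q := Real.mul_rpow hx1.le (by linarith)
      _ ≤ (x + 1) ^ q * (1 - q/(x+1)) := by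
          apply mul_le_mul_of_nonneg_left _ (Real.rpow_nonneg hx1.le _)
          calc (1 - 1/(x+1)) ^ q = (1 + -(1/(x+1))) ^ q := by ring_nf
            _ ≤ 1 + q * -(1/(x+1)) := hb
            _ = 1 - q/(x+1) := by ring
  have h2 : (x + 1) ^ q * (1 - q/(x+1)) = (x + 1) ^ q - q * (x + 1) ^ (q - 1) := by
    rw [Real.rpow_sub hx1, Real.rpow_one]
    field_simp
  linarith

lemma fSl_eq_rpow (α : ℝ) (j : ℕ) : fSl α j = ((j : ℝ) + slc α) ^ ((1 - α) - 1) := by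
  unfold fSl; norm_num

lemma T_lower (α : ℝ) (hα : 0 < α) (hα1 : α < 1) (m : ℕ) : ∀ n : ℕ, m ≤ n →
    ((n : ℝ) + 1 + slc α) ^ (1 - α) - ((m : ℝ) + 1 + slc α) ^ (1 - α)
      ≤ (1 - α) * ∑ k ∈ Finset.Icc (m + 1) n, fSl α k := by
  intro n hn
  induction n, hn using Nat.le_induction with
  | base => rw [Finset.Icc_eq_empty (by omega)]; simp
  | succ n hn ih =>
    rw [Finset.sum_Icc_succ_top (by omega)]
    have hxpos : (0:ℝ) < (n : ℝ) + 1 + slc α := by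
      have := slc_pos α; positivity
    have h := incr_upper (x := (n : ℝ) + 1 + slc α) (q := 1 - α) hxpos
      (by linarith) (by linarith)
    have h' : ((n : ℝ) + 1 + 1 + slc α) ^ (1 - α) - ((n : ℝ) + 1 + slc α) ^ (1 - α)
        ≤ (1 - α) * fSl α (n + 1) := by
      rw [fSl_eq_rpow]
      push_cast
      calc ((n : ℝ) + 1 + 1 + slc α) ^ (1 - α) - ((n : ℝ) + 1 + slc α) ^ (1 - α)
          = (((n : ℝ) + 1 + slc α) + 1) ^ (1 - α) - ((n : ℝ) + 1 + slc α) ^ (1 - α) := by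
            ring_nf
        _ ≤ (1 - α) * ((n : ℝ) + 1 + slc α) ^ ((1 - α) - 1) := h
    push_cast
    push_cast at ih
    linarith [h']

lemma T_upper (α : ℝ) (hα : 0 < α) (hα1 : α < 1) (m : ℕ) : ∀ n : ℕ, m ≤ n →
    (1 - α) * ∑ k ∈ Finset.Icc (m + 1) n, fSl α k
      ≤ ((n : ℝ) + slc α) ^ (1 - α) - ((m : ℝ) + slc α) ^ (1 - α) := by
  intro n hn
  induction n, hn using Nat.le_induction with
  | base => rw [Finset.Icc_eq_empty (by omega)]; simp
  | succ n hn ih =>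
    rw [Finset.sum_Icc_succ_top (by omega)]
    have hxpos : (0:ℝ) ≤ (n : ℝ) + slc α := (fSl_base_pos α n).le
    have h := incr_lower (x := (n : ℝ) + slc α) (q := 1 - α) hxpos
      (by linarith) (by linarith)
    have h' : (1 - α) * fSl α (n + 1)
        ≤ ((n : ℝ) + 1 + slc α) ^ (1 - α) - ((n : ℝ) + slc α) ^ (1 - α) := by
      rw [fSl_eq_rpow]
      push_cast
      calc (1 - α) * ((n : ℝ) + 1 + slc α) ^ ((1 - α) - 1)
          = (1 - α) * (((n : ℝ) + slc α) + 1) ^ ((1 - α) - 1) := by ring_nf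
        _ ≤ (((n : ℝ) + slc α) + 1) ^ (1 - α) - ((n : ℝ) + slc α) ^ (1 - α) := h
        _ = ((n : ℝ) + 1 + slc α) ^ (1 - α) - ((n : ℝ) + slc α) ^ (1 - α) := by ring_nf
    push_cast
    push_cast at ih
    linarith [h']

lemma lim_ratio (d K : ℝ) (hd : 0 ≤ d) {q : ℝ} (hq : 0 < q) :
    Tendsto (fun n : ℕ => (((n : ℝ) + d) ^ q - K) / (n : ℝ) ^ q) atTop (𝓝 1) := by
  have hpow : Tendsto (fun n : ℕ => (n : ℝ) ^ q) atTop atTop :=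
    (tendsto_rpow_atTop hq).comp tendsto_natCast_atTop_atTop
  have h2 : Tendsto (fun n : ℕ => K / (n : ℝ) ^ q) atTop (𝓝 0) :=
    Tendsto.div_atTop tendsto_const_nhds hpow
  have h1 : Tendsto (fun n : ℕ => ((n : ℝ) + d) ^ q / (n : ℝ) ^ q) atTop (𝓝 1) := by
    have base : Tendsto (fun n : ℕ => 1 + d / (n : ℝ)) atTop (𝓝 1) := by
      have := tendsto_const_nhds (x := (1:ℝ)) (f := atTop (α := ℕ)) |>.add
        (tendsto_const_div_atTop_nhds_zero_nat d)
      simpa using this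
    have hr := base.rpow_const (p := q) (Or.inl one_ne_zero)
    rw [Real.one_rpow] at hr
    apply hr.congr'
    filter_upwards [eventually_ge_atTop 1] with n hn
    have hn0 : (0:ℝ) < (n : ℝ) := by exact_mod_cast hn
    rw [show (1 : ℝ) + d / (n : ℝ) = ((n : ℝ) + d) / (n : ℝ) by field_simp,
      Real.div_rpow (by linarith) hn0.le]
  have := h1.sub h2
  rw [sub_zero] at this
  exact this.congr fun n => (sub_div _ _ _).symm

theorem stmt_15 (α : ℝ) (hα : 0 < α) (hα1 : α < 1) (m : ℕ) (hm : 1 ≤ m) :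
    Tendsto
      (fun n : ℕ => phi α n m / ((2 * m / (1 - α)) * (n : ℝ) ^ ((1 : ℝ) - α)))
      atTop (𝓝 1) := by
  have hq : (0:ℝ) < 1 - α := by linarith
  have hm0 : (0:ℝ) < (m : ℝ) := by exact_mod_cast hm
  set c := slc α with hc
  set A' : ℝ := 2 * ∑ k ∈ Finset.Icc 1 m, (k : ℝ) ^ 2 * Dlt α k
    + 2 * m * ((m : ℝ) + 1) * fSl α m with hA'
  set T : ℕ → ℝ := fun n => ∑ k ∈ Finset.Icc (m + 1) n, fSl α k with hT
  have hpow : Tendsto (fun n : ℕ => (n : ℝ) ^ ((1:ℝ) - α)) atTop atTop :=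
    (tendsto_rpow_atTop hq).comp tendsto_natCast_atTop_atTop
  -- the three pieces
  have t1 : Tendsto (fun n : ℕ => A' / ((2 * m / (1 - α)) * (n : ℝ) ^ ((1:ℝ) - α)))
      atTop (𝓝 0) :=
    Tendsto.div_atTop tendsto_const_nhds (hpow.const_mul_atTop (by positivity))
  have t2 : Tendsto (fun n : ℕ => (1 - α) * fSl α n / (n : ℝ) ^ ((1:ℝ) - α))
      atTop (𝓝 0) := by
    have hnum : Tendsto (fun n : ℕ => (1 - α) * fSl α n) atTop (𝓝 ((1 - α) * 0)) :=
      tendsto_const_nhds.mul (fSl_tendsto α hα)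
    exact Tendsto.div_atTop hnum hpow
  have t3 : Tendsto (fun n : ℕ => (1 - α) * T n / (n : ℝ) ^ ((1:ℝ) - α)) atTop (𝓝 1) := by
    have hL : Tendsto
        (fun n : ℕ => (((n : ℝ) + (1 + c)) ^ (1 - α) - ((m : ℝ) + 1 + c) ^ (1 - α))
          / (n : ℝ) ^ (1 - α)) atTop (𝓝 1) :=
      lim_ratio (1 + c) _ (by have := slc_pos α; linarith) hq
    have hU : Tendsto
        (fun n : ℕ => (((n : ℝ) + c) ^ (1 - α) - ((m : ℝ) + c) ^ (1 - α))
          / (n : ℝ) ^ (1 - α)) atTop (𝓝 1) :=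
      lim_ratio c _ (slc_pos α).le hq
    apply tendsto_of_tendsto_of_tendsto_of_le_of_le' hL hU
    · filter_upwards [eventually_ge_atTop m, eventually_ge_atTop 1] with n hn hn1
      have hn0 : (0:ℝ) < (n : ℝ) ^ ((1:ℝ) - α) :=
        Real.rpow_pos_of_pos (by exact_mod_cast hn1) _
      have := T_lower α hα hα1 m n hn
      rw [show (n : ℝ) + (1 + c) = (n : ℝ) + 1 + c by ring]
      gcongr
    · filter_upwards [eventually_ge_atTop m, eventually_ge_atTop 1] with n hn hn1
      have hn0 : (0:ℝ) < (n : ℝ) ^ ((1:ℝ) - α) :=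
        Real.rpow_pos_of_pos (by exact_mod_cast hn1) _
      have := T_upper α hα hα1 m n hn
      gcongr
  have combined := (t1.add t3).sub t2
  rw [show (0:ℝ) + 1 - 0 = 1 by norm_num] at combined
  apply combined.congr'
  filter_upwards [eventually_ge_atTop m, eventually_ge_atTop 1] with n hn hn1
  have hn0 : (0:ℝ) < (n : ℝ) := by exact_mod_cast hn1
  have hnq : (0:ℝ) < (n : ℝ) ^ ((1:ℝ) - α) := Real.rpow_pos_of_pos hn0 _
  have hphi : phi α n m = A' + 2 * m * T n - 2 * m * fSl α n := by
    rw [phi, middle_sum α m n hn, tsum_Dlt α hα n, hA', hT]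
    ring
  rw [hphi]
  field_simp
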